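/- Let I ⊆ E(V) be a homogeneous ideal generated in degrees ≥ 2 and J = π^{-1}(I). Then J has a finite Gröbner basis with respect to ≺_t. -/

import Mathlib

open scoped BigOperators

/-- Words in the letters `X_1, …, X_n`: the free monoid on `Fin n`. -/
abbrev Word (n : ℕ) := FreeMonoid (Fin n)

/-- The free associative algebra `K⟨X_1,…,X_n⟩`, as the monoid algebra of the free monoid. -/
abbrev FA (K : Type) [Field K] (n : ℕ) := MonoidAlgebra K (Word n)

/-- The word `w`, viewed as an element of `K⟨X_1,…,X_n⟩`. -/
noncomputable def ofW (K : Type) [Field K] {n : ℕ} (w : Word n) : FA K n :=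
  MonoidAlgebra.of K (Word n) w

/-- The variable `X_i`. -/
noncomputable def Xv (K : Type) [Field K] {n : ℕ} (i : Fin n) : FA K n :=
  ofW K (FreeMonoid.of i)

/-- The set of anti-commutators `X_iX_j + X_jX_i`, `i ≤ j`. -/
def antiCommSet (K : Type) [Field K] (n : ℕ) : Set (FA K n) :=
  { f | ∃ i j : Fin n, i ≤ j ∧ f = Xv K i * Xv K j + Xv K j * Xv K i }

/-- The anti-commutator ideal `C`. -/
noncomputable def antiCommIdeal (K : Type) [Field K] (n : ℕ) : TwoSidedIdeal (FA K n) :=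
  TwoSidedIdeal.span (antiCommSet K n)

/-- The exterior algebra `E(V)` as the quotient of `K⟨X_1,…,X_n⟩` by `C`. -/
abbrev EV (K : Type) [Field K] (n : ℕ) := (antiCommIdeal K n).ringCon.Quotient

/-- The quotient map `π : K⟨X_1,…,X_n⟩ → E(V)`. -/
noncomputable def piE (K : Type) [Field K] (n : ℕ) : FA K n →+* EV K n :=
  RingCon.mk' _

noncomputable instance (K : Type) [Field K] (n : ℕ) : Module K (EV K n) :=
  { (inferInstance : DistribMulAction K (EV K n)) with
    add_smul := fun a b f => by
      obtain ⟨x, rfl⟩ := Quotient.mk''_surjective f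
      show (((a + b) • x : FA K n) : EV K n) = ((a • x : FA K n) : EV K n) + ((b • x : FA K n) : EV K n)
      rw [← RingCon.coe_add, add_smul]
    zero_smul := fun f => by
      obtain ⟨x, rfl⟩ := Quotient.mk''_surjective f
      show (((0 : K) • x : FA K n) : EV K n) = ((0 : FA K n) : EV K n)
      rw [zero_smul] }

/-- The sorted word associated to a finite set of indices. -/
def wordOf {n : ℕ} (A : Finset (Fin n)) : Word n :=
  FreeMonoid.ofList (A.sort (· ≤ ·))

/-- The square-free monomial `x_A ∈ E(V)`. -/
noncomputable def xF (K : Type) [Field K] {n : ℕ} (A : Finset (Fin n)) : EV K n :=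
  piE K n (ofW K (wordOf A))

/-- A monoid well-order on the free commutative monoid on `x_1,…,x_n`
(identified additively with `Fin n →₀ ℕ`): a total, well-founded, translation
invariant strict order. -/
structure IsCommMonoidWellOrder (n : ℕ) (r : (Fin n →₀ ℕ) → (Fin n →₀ ℕ) → Prop) : Prop where
  trans : Transitive r
  irrefl : ∀ a, ¬ r a a
  total : ∀ a b, r a b ∨ a = b ∨ r b a
  wf : WellFounded r
  mul_compat : ∀ a b c, r a b → r (a + c) (b + c)

/-- A monoid well-order on the free monoid `⟨X_1,…,X_n⟩`. -/
structure IsMonoidWellOrder (n : ℕ) (r : Word n → Word n → Prop) : Prop where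
  trans : Transitive r
  irrefl : ∀ a, ¬ r a a
  total : ∀ a b, r a b ∨ a = b ∨ r b a
  wf : WellFounded r
  mul_compat : ∀ a b p q, r a b → r (p * a * q) (p * b * q)

/-- A finite set of indices, viewed as a square-free element of the free
commutative monoid. -/
noncomputable def sqMon {n : ℕ} (A : Finset (Fin n)) : Fin n →₀ ℕ :=
  Multiset.toFinsupp (A.val)

/-- The restriction `≺_e` of the order `≺_s` (given by `es`) to square-free monomials,
identified with finite subsets of `{1,…,n}`. -/
def precE {n : ℕ} (es : (Fin n →₀ ℕ) → (Fin n →₀ ℕ) → Prop)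
    (A B : Finset (Fin n)) : Prop :=
  es (sqMon A) (sqMon B)

/-- The degree-lexicographic order on words, with `X_1 < X_2 < ⋯ < X_n`. -/
def degLex {n : ℕ} (M N : Word n) : Prop :=
  (FreeMonoid.toList M).length < (FreeMonoid.toList N).length ∨
    ((FreeMonoid.toList M).length = (FreeMonoid.toList N).length ∧
      List.Lex (· < ·) (FreeMonoid.toList M) (FreeMonoid.toList N))

/-- The set of letters of a word. -/
def lettersOf {n : ℕ} (M : Word n) : Finset (Fin n) :=
  (FreeMonoid.toList M).toFinset

/-- A word is square-free iff no letter is repeated; equivalently `π(M) ≠ 0` in `E(V)`. -/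
def SqFreeWord {n : ℕ} (M : Word n) : Prop :=
  (FreeMonoid.toList M).Nodup

/-- The order `≺_t` on words: square-free words are compared first by the `≺_e`-order on
their underlying square-free commutative monomials, ties broken degree-lexicographically;
words mapping to `0` in the exterior algebra are compared degree-lexicographically. -/
def precT {n : ℕ} (es : (Fin n →₀ ℕ) → (Fin n →₀ ℕ) → Prop) (M N : Word n) : Prop :=
  (SqFreeWord M ∧ SqFreeWord N ∧
    (precE es (lettersOf M) (lettersOf N) ∨ (lettersOf M = lettersOf N ∧ degLex M N)))
  ∨ ((¬ SqFreeWord M ∨ ¬ SqFreeWord N) ∧ degLex M N)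

/-- `m` is the `r`-largest word occurring in `f` with nonzero coefficient. -/
def IsLeadWord {K : Type} [Field K] {n : ℕ} (r : Word n → Word n → Prop)
    (f : FA K n) (m : Word n) : Prop :=
  m ∈ f.coeff.support ∧ ∀ m' ∈ f.coeff.support, m' ≠ m → r m' m

/-- The initial ideal `in_r(J)` of a two-sided ideal `J ⊆ K⟨X_1,…,X_n⟩`: the two-sided
ideal generated by the leading words of the nonzero elements of `J`. -/
noncomputable def inIdeal {K : Type} [Field K] {n : ℕ} (r : Word n → Word n → Prop)
    (J : TwoSidedIdeal (FA K n)) : TwoSidedIdeal (FA K n) :=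
  TwoSidedIdeal.span { g | ∃ f m, f ∈ J ∧ f ≠ 0 ∧ IsLeadWord r f m ∧ g = ofW K m }

/-- `G` is a Gröbner basis of `J` w.r.t. `r`: `G` consists of nonzero elements of `J`
whose leading words generate `in_r(J)`. -/
def IsGB {K : Type} [Field K] {n : ℕ} (r : Word n → Word n → Prop)
    (J : TwoSidedIdeal (FA K n)) (G : Set (FA K n)) : Prop :=
  (∀ g ∈ G, g ∈ J ∧ g ≠ 0) ∧
  TwoSidedIdeal.span { h | ∃ g ∈ G, ∃ m, IsLeadWord r g m ∧ h = ofW K m } = inIdeal r J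

/-- `G` is a minimal Gröbner basis: no leading word of an element of `G` is a subword
(factor) of the leading word of another element. -/
def IsMinGB {K : Type} [Field K] {n : ℕ} (r : Word n → Word n → Prop)
    (J : TwoSidedIdeal (FA K n)) (G : Set (FA K n)) : Prop :=
  IsGB r J G ∧
  ∀ g ∈ G, ∀ g' ∈ G, g ≠ g' → ∀ m m', IsLeadWord r g m → IsLeadWord r g' m' →
    ¬ (FreeMonoid.toList m <:+: FreeMonoid.toList m')

/-- An element of `K⟨X_1,…,X_n⟩` is homogeneous of degree `d`. -/
def IsHomogOfDeg {K : Type} [Field K] {n : ℕ} (f : FA K n) (d : ℕ) : Prop :=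
  ∀ w ∈ f.coeff.support, (FreeMonoid.toList w).length = d

/-- `L ⊆ E(V)` is a monomial ideal: it is generated by square-free monomials. -/
def IsMonomialIdealE {K : Type} [Field K] {n : ℕ} (L : TwoSidedIdeal (EV K n)) : Prop :=
  ∃ S : Set (Finset (Fin n)), L = TwoSidedIdeal.span (xF K '' S)

/-- The set `U_L(m)` for `m = x_A`: square-free monomials `u` in the variables strictly
between `min A` and `max A` such that `u·(m/x_{min A}) ∉ L` and `u·(m/x_{max A}) ∉ L`. -/
noncomputable def UL {K : Type} [Field K] {n : ℕ} (L : TwoSidedIdeal (EV K n))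
    (A : Finset (Fin n)) : Set (Finset (Fin n)) :=
  { u | ∃ hA : A.Nonempty,
      (∀ i ∈ u, A.min' hA < i ∧ i < A.max' hA) ∧
      xF K u * xF K (A.erase (A.min' hA)) ∉ L ∧
      xF K u * xF K (A.erase (A.max' hA)) ∉ L }

/-- `x_A` is a minimal (monomial) generator of the monomial ideal `L`. -/
def IsMinGenE {K : Type} [Field K] {n : ℕ} (L : TwoSidedIdeal (EV K n))
    (A : Finset (Fin n)) : Prop :=
  xF K A ∈ L ∧ ∀ B ⊆ A, B ≠ A → xF K B ∉ L

/-- `L` is squeezed: `U_L(m) = {1}` for every minimal generator `m` of `L`. -/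
def IsSqueezed {K : Type} [Field K] {n : ℕ} (L : TwoSidedIdeal (EV K n)) : Prop :=
  ∀ A : Finset (Fin n), IsMinGenE L A → UL L A = {∅}

/-- `L` is stable: if `m ∈ L` and `x_j` is the largest variable dividing `m`,
then `x_i·(m/x_j) ∈ L` for all `i ≤ j`. -/
def IsStableE {K : Type} [Field K] {n : ℕ} (L : TwoSidedIdeal (EV K n)) : Prop :=
  ∀ A : Finset (Fin n), ∀ hA : A.Nonempty, xF K A ∈ L →
    ∀ i ≤ A.max' hA, xF K {i} * xF K (A.erase (A.max' hA)) ∈ L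

/-- `L` is strongly stable: if `m ∈ L` and `x_j` divides `m`, then
`x_i·(m/x_j) ∈ L` for all `i ≤ j` with `x_i·(m/x_j) ≠ 0`. -/
def IsStronglyStableE {K : Type} [Field K] {n : ℕ} (L : TwoSidedIdeal (EV K n)) : Prop :=
  ∀ A : Finset (Fin n), xF K A ∈ L → ∀ j ∈ A, ∀ i ≤ j,
    xF K {i} * xF K (A.erase j) ≠ 0 → xF K {i} * xF K (A.erase j) ∈ L

/-- `δ` is the canonical `K`-linear section of `π`, sending `x_{i_1}⋯x_{i_r}` to
`X_{i_1}⋯X_{i_r}` for `i_1 < ⋯ < i_r`. -/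
def IsDeltaSection {K : Type} [Field K] {n : ℕ} (δ : EV K n →ₗ[K] FA K n) : Prop :=
  ∀ A : Finset (Fin n), δ (xF K A) = ofW K (wordOf A)

/-- `x_A` is the `≺_e`-leading monomial of `0 ≠ f ∈ E(V)`, computed via the canonical
representative `δ f`. -/
def IsLeadE {K : Type} [Field K] {n : ℕ} (es : (Fin n →₀ ℕ) → (Fin n →₀ ℕ) → Prop)
    (δ : EV K n →ₗ[K] FA K n) (f : EV K n) (A : Finset (Fin n)) : Prop :=
  wordOf A ∈ (δ f).coeff.support ∧
  ∀ w ∈ (δ f).coeff.support, w ≠ wordOf A → precE es (lettersOf w) A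

/-- The initial ideal `in_{≺_e}(I)` of an ideal `I ⊆ E(V)`. -/
noncomputable def inE {K : Type} [Field K] {n : ℕ}
    (es : (Fin n →₀ ℕ) → (Fin n →₀ ℕ) → Prop) (δ : EV K n →ₗ[K] FA K n)
    (I : TwoSidedIdeal (EV K n)) : TwoSidedIdeal (EV K n) :=
  TwoSidedIdeal.span { h | ∃ f A, f ∈ I ∧ f ≠ 0 ∧ IsLeadE es δ f A ∧ h = xF K A }

/-- `G` is a Gröbner basis of `I ⊆ E(V)` w.r.t. `≺_e`. -/
def IsGBE {K : Type} [Field K] {n : ℕ} (es : (Fin n →₀ ℕ) → (Fin n →₀ ℕ) → Prop)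
    (δ : EV K n →ₗ[K] FA K n) (I : TwoSidedIdeal (EV K n)) (G : Set (EV K n)) : Prop :=
  (∀ g ∈ G, g ∈ I ∧ g ≠ 0) ∧
  TwoSidedIdeal.span { h | ∃ g ∈ G, ∃ A, IsLeadE es δ g A ∧ h = xF K A } = inE es δ I

/-- `G` is a minimal Gröbner basis of `I ⊆ E(V)` w.r.t. `≺_e`: moreover no leading
monomial of an element of `G` divides the leading monomial of another element. -/
def IsMinGBE {K : Type} [Field K] {n : ℕ} (es : (Fin n →₀ ℕ) → (Fin n →₀ ℕ) → Prop)
    (δ : EV K n →ₗ[K] FA K n) (I : TwoSidedIdeal (EV K n)) (G : Set (EV K n)) : Prop :=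
  IsGBE es δ I G ∧
  ∀ g ∈ G, ∀ g' ∈ G, g ≠ g' → ∀ A A', IsLeadE es δ g A → IsLeadE es δ g' A' → ¬ A ⊆ A'

/-- `I ⊆ E(V)` is a homogeneous ideal generated in degrees `≥ 2`: it is generated by
images of homogeneous elements of degree `≥ 2`. -/
def IsHomogGenInDegGE2 {K : Type} [Field K] {n : ℕ} (I : TwoSidedIdeal (EV K n)) : Prop :=
  ∃ S : Set (FA K n), (∀ f ∈ S, ∃ d, 2 ≤ d ∧ IsHomogOfDeg f d) ∧
    I = TwoSidedIdeal.span (piE K n '' S)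

/-- The action of an `n × n` matrix `g` on `K⟨X_1,…,X_n⟩` by the algebra endomorphism
determined by `X_i ↦ Σ_ℓ g_{ℓi} X_ℓ`. -/
noncomputable def actFA (K : Type) [Field K] {n : ℕ} (g : Matrix (Fin n) (Fin n) K) :
    FA K n →ₐ[K] FA K n :=
  MonoidAlgebra.lift (R := K) (M := Word n) (A := FA K n)
    (FreeMonoid.lift fun i => ∑ l : Fin n, g l i • Xv K l)

/-- The degree-`d` homogeneous component of a two-sided ideal of `K⟨X_1,…,X_n⟩`,
as a `K`-subspace. -/
def degComp {K : Type} [Field K] {n : ℕ} (c : TwoSidedIdeal (FA K n)) (d : ℕ) :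
    Submodule K (FA K n) where
  carrier := {f | f ∈ c ∧ IsHomogOfDeg f d}
  add_mem' := fun {a b} ha hb => ⟨c.add_mem ha.1 hb.1, fun w hw => by
    classical
    rw [MonoidAlgebra.coeff_add] at hw
    rcases Finset.mem_union.1 (Finsupp.support_add hw) with h | h
    exacts [ha.2 w h, hb.2 w h]⟩
  zero_mem' := ⟨c.zero_mem, fun w hw => by simp at hw⟩
  smul_mem' := fun k f hf => ⟨by
      rw [Algebra.smul_def]
      exact c.mul_mem_left _ _ hf.1,
    fun w hw => hf.2 w (Finsupp.support_smul hw)⟩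

/-- A two-sided ideal of `K⟨X_1,…,X_n⟩` is homogeneous (for the grading by word length). -/
def IsHomogIdeal {K : Type} [Field K] {n : ℕ} (a : TwoSidedIdeal (FA K n)) : Prop :=
  ∀ f ∈ a, ∀ d : ℕ, MonoidAlgebra.ofCoeff (f.coeff.filter (fun w => (FreeMonoid.toList w).length = d)) ∈ a

/-- Evaluation of a polynomial in the matrix entries at an element of `GL_n(K)`. -/
noncomputable def evalGL {K : Type} [Field K] {n : ℕ}
    (p : MvPolynomial (Fin n × Fin n) K) (g : GL (Fin n) K) : K :=
  MvPolynomial.eval (fun q => (g : Matrix (Fin n) (Fin n) K) q.1 q.2) p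

/-- The image `g(a)` of a two-sided ideal under the action of a matrix `g`. -/
noncomputable def mapIdealFA (K : Type) [Field K] {n : ℕ} (g : Matrix (Fin n) (Fin n) K)
    (a : TwoSidedIdeal (FA K n)) : TwoSidedIdeal (FA K n) :=
  TwoSidedIdeal.span ((actFA K g) '' (a : Set (FA K n)))

/-- `b` is the generic initial ideal of `a` w.r.t. the order `r`: `b` is a monomial
ideal and there is a countable family of nonempty basic Zariski-open subsets of
`GL_n(K)` on whose (F_δ) intersection `in_r(g(a)) = b`. -/
def IsGin {K : Type} [Field K] {n : ℕ} (r : Word n → Word n → Prop)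
    (a b : TwoSidedIdeal (FA K n)) : Prop :=
  (∃ S : Set (Word n), b = TwoSidedIdeal.span (ofW K '' S)) ∧
  ∃ ps : ℕ → MvPolynomial (Fin n × Fin n) K,
    (∀ k, ∃ g : GL (Fin n) K, evalGL (ps k) g ≠ 0) ∧
    (∃ g : GL (Fin n) K, ∀ k, evalGL (ps k) g ≠ 0) ∧
    ∀ g : GL (Fin n) K, (∀ k, evalGL (ps k) g ≠ 0) →
      inIdeal r (mapIdealFA K (↑g) a) = b

/-- `bE` is the generic initial ideal of the ideal `I ⊆ E(V)` w.r.t. `≺_e`. -/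
def IsGinE {K : Type} [Field K] {n : ℕ} (es : (Fin n →₀ ℕ) → (Fin n →₀ ℕ) → Prop)
    (δ : EV K n →ₗ[K] FA K n) (I bE : TwoSidedIdeal (EV K n)) : Prop :=
  IsMonomialIdealE bE ∧
  ∃ ps : ℕ → MvPolynomial (Fin n × Fin n) K,
    (∀ k, ∃ g : GL (Fin n) K, evalGL (ps k) g ≠ 0) ∧
    (∃ g : GL (Fin n) K, ∀ k, evalGL (ps k) g ≠ 0) ∧
    ∀ g : GL (Fin n) K, (∀ k, evalGL (ps k) g ≠ 0) →
      ∀ gE : EV K n ≃+* EV K n, (∀ x, gE (piE K n x) = piE K n (actFA K (↑g) x)) →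
        inE es δ (TwoSidedIdeal.span (⇑gE '' (I : Set (EV K n)))) = bE


section AuxGB

variable {K : Type} [Field K] {n : ℕ}

private lemma ofW_mul (u v : Word n) : ofW K (u * v) = ofW K u * ofW K v :=
  map_mul (MonoidAlgebra.of K (Word n)) u v

private lemma chain_or_pair {α : Type*} [LinearOrder α] :
    ∀ l : List α, l.IsChain (· < ·) ∨
      ∃ (p : List α) (a b : α) (q : List α), l = p ++ a :: b :: q ∧ b ≤ a
  | [] => Or.inl List.isChain_nil
  | [_] => Or.inl (List.isChain_singleton _)
  | a :: b :: t => by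
    rcases le_or_gt b a with h | h
    · exact Or.inr ⟨[], a, b, t, rfl, h⟩
    · rcases chain_or_pair (b :: t) with hc | ⟨p, x, y, q, heq, hxy⟩
      · exact Or.inl (List.isChain_cons_cons.2 ⟨h, hc⟩)
      · exact Or.inr ⟨a :: p, x, y, q, by rw [heq]; rfl, hxy⟩

private lemma piE_anti {f : FA K n} (hf : f ∈ antiCommIdeal K n) : piE K n f = 0 := by
  have h0 : (antiCommIdeal K n).ringCon f 0 := hf
  have h1 : piE K n f = piE K n 0 := (RingCon.eq _).2 h0
  simpa using h1

private lemma ac_mem (b a : Fin n) (h : b ≤ a) :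
    Xv K b * Xv K a + Xv K a * Xv K b ∈ antiCommIdeal K n :=
  TwoSidedIdeal.subset_span ⟨b, a, h, rfl⟩

private lemma ac_single (b a : Fin n) :
    Xv K b * Xv K a = MonoidAlgebra.single (FreeMonoid.of b * FreeMonoid.of a) (1 : K) := by
  have : Xv K b * Xv K a = ofW K (FreeMonoid.of b * FreeMonoid.of a) := (ofW_mul _ _).symm
  rw [this]; rfl

private lemma precT_pair (es : (Fin n →₀ ℕ) → (Fin n →₀ ℕ) → Prop) {b a : Fin n} (h : b < a) :
    precT es (FreeMonoid.of b * FreeMonoid.of a) (FreeMonoid.of a * FreeMonoid.of b) := by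
  left
  refine ⟨?_, ?_, Or.inr ⟨?_, Or.inr ⟨rfl, List.Lex.rel h⟩⟩⟩
  · show ([b, a] : List (Fin n)).Nodup
    simp [h.ne]
  · show ([a, b] : List (Fin n)).Nodup
    simp [h.ne']
  · show ([b, a] : List (Fin n)).toFinset = ([a, b] : List (Fin n)).toFinset
    simp only [List.toFinset_cons, List.toFinset_nil, LawfulSingleton.insert_empty_eq]
    exact Finset.pair_comm b a

private lemma ac_lead (hchar : (2 : K) ≠ 0) (es : (Fin n →₀ ℕ) → (Fin n →₀ ℕ) → Prop)
    {b a : Fin n} (h : b ≤ a) :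
    IsLeadWord (precT es) (Xv K b * Xv K a + Xv K a * Xv K b)
      (FreeMonoid.of a * FreeMonoid.of b) := by
  classical
  rcases eq_or_lt_of_le h with rfl | hlt
  · have hsing : Xv K b * Xv K b + Xv K b * Xv K b =
        MonoidAlgebra.single (FreeMonoid.of b * FreeMonoid.of b) (2 : K) := by
      rw [ac_single b b, ← MonoidAlgebra.single_add, one_add_one_eq_two]
    constructor
    · rw [hsing, MonoidAlgebra.coeff_single, Finsupp.mem_support_iff, Finsupp.single_eq_same]
      exact hchar
    · intro m' hm' hne
      rw [hsing, MonoidAlgebra.coeff_single, Finsupp.support_single_ne_zero _ hchar, Finset.mem_singleton] at hm'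
      exact absurd hm' hne
  · have hne : FreeMonoid.of b * FreeMonoid.of a ≠ FreeMonoid.of a * FreeMonoid.of b := by
      intro hh
      have h2 := congrArg FreeMonoid.toList hh
      simp only [FreeMonoid.toList_mul, FreeMonoid.toList_of, List.cons_append,
        List.nil_append, List.cons.injEq] at h2
      exact hlt.ne h2.1
    have hsupp : (Xv K b * Xv K a + Xv K a * Xv K b).coeff.support =
        {FreeMonoid.of b * FreeMonoid.of a, FreeMonoid.of a * FreeMonoid.of b} := by
      rw [ac_single b a, ac_single a b, MonoidAlgebra.coeff_add, MonoidAlgebra.coeff_single,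
          MonoidAlgebra.coeff_single, Finsupp.support_add_eq,
        Finsupp.support_single_ne_zero _ one_ne_zero,
        Finsupp.support_single_ne_zero _ one_ne_zero, ← Finset.insert_eq]
      rw [Finsupp.support_single_ne_zero _ one_ne_zero,
        Finsupp.support_single_ne_zero _ one_ne_zero, Finset.disjoint_singleton]
      exact hne
    constructor
    · rw [hsupp]
      simp
    · intro m' hm' hne'
      rw [hsupp, Finset.mem_insert, Finset.mem_singleton] at hm'
      rcases hm' with rfl | rfl
      · exact precT_pair es hlt
      · exact absurd rfl hne'

private lemma ac_ne_zero (hchar : (2 : K) ≠ 0) {b a : Fin n} (h : b ≤ a) :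
    Xv K b * Xv K a + Xv K a * Xv K b ≠ 0 := by
  intro h0
  have := (ac_lead hchar (fun _ _ => False) h).1
  rw [h0] at this
  simp at this

end AuxGB

/-- Let `I ⊆ E(V)` be a homogeneous ideal generated in degrees `≥ 2`
and `J = π⁻¹(I)`.  Then `J` has a finite Gröbner basis with respect to `≺_t`. -/
theorem preimage_has_finite_GB (K : Type) [Field K] (hchar : (2 : K) ≠ 0)
    (n : ℕ) (hn : 1 ≤ n)
    (es : (Fin n →₀ ℕ) → (Fin n →₀ ℕ) → Prop) (hes : IsCommMonoidWellOrder n es)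
    (I : TwoSidedIdeal (EV K n)) (hI : IsHomogGenInDegGE2 I)
    (J : TwoSidedIdeal (FA K n)) (hJ : ∀ x, x ∈ J ↔ piE K n x ∈ I) :
    ∃ G : Finset (FA K n), IsGB (precT es) J (↑G : Set (FA K n)) := by
  classical
  set r := precT es with hr
  -- the chosen representative for each potential leading set
  let P : Finset (Fin n) → Prop :=
    fun A => ∃ f : FA K n, f ∈ J ∧ f ≠ 0 ∧ IsLeadWord r f (wordOf A)
  let F : Finset (Fin n) → FA K n := fun A => if h : P A then h.choose else 0
  have hF : ∀ A, P A → F A ∈ J ∧ F A ≠ 0 ∧ IsLeadWord r (F A) (wordOf A) := by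
    intro A hA
    simpa only [F, dif_pos hA] using hA.choose_spec
  let T : Finset (Finset (Fin n)) := Finset.univ.filter P
  let ac : Fin n × Fin n → FA K n := fun p => Xv K p.1 * Xv K p.2 + Xv K p.2 * Xv K p.1
  refine ⟨(Finset.univ.image ac) ∪ T.image F, ?_, ?_⟩
  · -- all elements are nonzero elements of J
    intro g hg
    rw [Finset.mem_coe, Finset.mem_union] at hg
    rcases hg with hg | hg
    · obtain ⟨p, -, rfl⟩ := Finset.mem_image.1 hg
      obtain ⟨b, a, hba, hac⟩ : ∃ b a : Fin n, b ≤ a ∧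
          ac p = Xv K b * Xv K a + Xv K a * Xv K b := by
        rcases le_total p.1 p.2 with h | h
        · exact ⟨p.1, p.2, h, rfl⟩
        · exact ⟨p.2, p.1, h, add_comm _ _⟩
      rw [hac]
      refine ⟨(hJ _).2 ?_, ac_ne_zero hchar hba⟩
      rw [piE_anti (ac_mem b a hba)]
      exact I.zero_mem
    · obtain ⟨A, hA, rfl⟩ := Finset.mem_image.1 hg
      have hAP : P A := (Finset.mem_filter.1 hA).2
      exact ⟨(hF A hAP).1, (hF A hAP).2.1⟩
  · -- the leading words generate the initial ideal
    apply le_antisymm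
    · intro x hx
      refine TwoSidedIdeal.mem_span_iff.1 hx _ ?_
      rintro h ⟨g, hg, m, hlead, rfl⟩
      rw [Finset.mem_coe, Finset.mem_union] at hg
      have hgJ : g ∈ J ∧ g ≠ 0 := by
        rcases hg with hg | hg
        · obtain ⟨p, -, rfl⟩ := Finset.mem_image.1 hg
          obtain ⟨b, a, hba, hac⟩ : ∃ b a : Fin n, b ≤ a ∧
              ac p = Xv K b * Xv K a + Xv K a * Xv K b := by
            rcases le_total p.1 p.2 with h | h
            · exact ⟨p.1, p.2, h, rfl⟩
            · exact ⟨p.2, p.1, h, add_comm _ _⟩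
          rw [hac]
          refine ⟨(hJ _).2 ?_, ac_ne_zero hchar hba⟩
          rw [piE_anti (ac_mem b a hba)]
          exact I.zero_mem
        · obtain ⟨A, hA, rfl⟩ := Finset.mem_image.1 hg
          have hAP : P A := (Finset.mem_filter.1 hA).2
          exact ⟨(hF A hAP).1, (hF A hAP).2.1⟩
      exact TwoSidedIdeal.subset_span ⟨g, m, hgJ.1, hgJ.2, hlead, rfl⟩
    · intro x hx
      refine TwoSidedIdeal.mem_span_iff.1 hx _ ?_
      rintro h ⟨f, m, hfJ, hf0, hlead, rfl⟩
      rcases chain_or_pair (FreeMonoid.toList m) with hc | ⟨p, a, b, q, heq, hba⟩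
      · -- strictly increasing word: it is `wordOf` of its letter set
        have hpm : (FreeMonoid.toList m).Pairwise (· < ·) :=
          List.isChain_iff_pairwise.1 hc
        have hnd : (FreeMonoid.toList m).Nodup := hpm.imp ne_of_lt
        have hsorted : (FreeMonoid.toList m).Pairwise (· ≤ ·) := hpm.imp le_of_lt
        have hsort : Finset.sort (FreeMonoid.toList m).toFinset (· ≤ ·) =
            FreeMonoid.toList m := (List.toFinset_sort _ hnd).2 hsorted
        have hmw : m = wordOf (lettersOf m) := by
          rw [wordOf, lettersOf, hsort]
          exact (FreeMonoid.ofList_toList m).symm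
        have hAP : P (lettersOf m) := ⟨f, hfJ, hf0, hmw ▸ hlead⟩
        refine TwoSidedIdeal.subset_span ⟨F (lettersOf m), ?_, wordOf (lettersOf m),
          (hF _ hAP).2.2, congrArg (ofW K) hmw⟩
        rw [Finset.mem_coe, Finset.mem_union]
        right
        exact Finset.mem_image.2 ⟨lettersOf m, Finset.mem_filter.2 ⟨Finset.mem_univ _, hAP⟩, rfl⟩
      · -- the word contains a non-increasing adjacent pair
        have hinj : Function.Injective (FreeMonoid.toList (α := Fin n)) := fun x y hxy => by
          rw [← FreeMonoid.ofList_toList x, hxy, FreeMonoid.ofList_toList]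
        have hmdec : m = FreeMonoid.ofList p * (FreeMonoid.of a * FreeMonoid.of b) *
            FreeMonoid.ofList q := by
          apply hinj
          simp [heq, FreeMonoid.toList_mul, FreeMonoid.toList_ofList, FreeMonoid.toList_of]
        have hmid : ofW K (FreeMonoid.of a * FreeMonoid.of b) ∈
            TwoSidedIdeal.span {h | ∃ g ∈ ((Finset.univ.image ac ∪ T.image F : Finset (FA K n)) :
              Set (FA K n)), ∃ m, IsLeadWord r g m ∧ h = ofW K m} := by
          refine TwoSidedIdeal.subset_span ⟨Xv K b * Xv K a + Xv K a * Xv K b, ?_,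
            FreeMonoid.of a * FreeMonoid.of b, ac_lead hchar es hba, rfl⟩
          rw [Finset.mem_coe, Finset.mem_union]
          left
          exact Finset.mem_image.2 ⟨(b, a), Finset.mem_univ _, rfl⟩
        rw [hmdec, ofW_mul, ofW_mul]
        exact TwoSidedIdeal.mul_mem_right _ _ _
          (TwoSidedIdeal.mul_mem_left _ _ _ hmid)
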